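/- arXiv:2102.09367 — 3 statements merged into one kernel-verified Lean document; each statement's English description precedes it below -/
import Mathlib

section
/- Let I = (h₁,…,h_r) ⊂ ℝ[x] and let g₁,…,g_k generate the real radical √[ℝ]{I}. Then there exists d₀ such that for all d ≥ d₀ and every σ ∈ L_{2d}(±h), each gᵢ lies in Ann_d(σ); consequently √[ℝ]{I} ⊆ (Ann_d(σ)) for all such σ. -/
open MvPolynomial

/-- The real radical of an ideal `I ⊆ ℝ[x₁,…,xₙ]`. -/
def realRadical {n : ℕ} (I : Ideal (MvPolynomial (Fin n) ℝ)) : Set (MvPolynomial (Fin n) ℝ) :=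
  {p | ∃ (m : ℕ) (s : MvPolynomial (Fin n) ℝ), IsSumSq s ∧ p ^ (2 * m) + s ∈ I}

/-- The truncated annihilator `Ann_d(σ)`. -/
def Ann {n : ℕ} (σ : MvPolynomial (Fin n) ℝ →ₗ[ℝ] ℝ) (d : ℕ) : Set (MvPolynomial (Fin n) ℝ) :=
  {f | f.totalDegree ≤ d ∧ ∀ g : MvPolynomial (Fin n) ℝ, g.totalDegree ≤ d → σ (f * g) = 0}

/-- Membership in the truncated cone `L_{2d}(±h)`. -/
def MemL {n r : ℕ} (h : Fin r → MvPolynomial (Fin n) ℝ) (d : ℕ)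
    (σ : MvPolynomial (Fin n) ℝ →ₗ[ℝ] ℝ) : Prop :=
  (∀ f : MvPolynomial (Fin n) ℝ, f.totalDegree ≤ d → 0 ≤ σ (f ^ 2)) ∧
    ∀ (i : Fin r) (q : MvPolynomial (Fin n) ℝ),
      (q * h i).totalDegree ≤ 2 * d → σ (q * h i) = 0

-- Cauchy–Schwarz style consequence of positivity
lemma cs_zero {n d : ℕ} (σ : MvPolynomial (Fin n) ℝ →ₗ[ℝ] ℝ)
    (hpsd : ∀ f : MvPolynomial (Fin n) ℝ, f.totalDegree ≤ d → 0 ≤ σ (f ^ 2))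
    {u v : MvPolynomial (Fin n) ℝ} (hu : u.totalDegree ≤ d) (hv : v.totalDegree ≤ d)
    (hu0 : σ (u ^ 2) = 0) : σ (u * v) = 0 := by
  have key : ∀ t : ℝ, 0 ≤ 2 * t * σ (u * v) + t ^ 2 * σ (v ^ 2) := by
    intro t
    have hdeg : (u + t • v).totalDegree ≤ d := by
      refine le_trans (totalDegree_add _ _) (max_le hu ?_)
      exact le_trans (totalDegree_smul_le _ _) hv
    have h0 := hpsd _ hdeg
    have hexp : (u + t • v) ^ 2 = u ^ 2 + (2 * t) • (u * v) + (t ^ 2) • (v ^ 2) := by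
      simp only [smul_eq_C_mul, map_mul, map_pow, map_ofNat]
      ring
    rw [hexp] at h0
    simpa [hu0, map_smul, smul_eq_mul] using h0
  set a := σ (u * v) with ha
  set b := σ (v ^ 2) with hb
  have hbnn : 0 ≤ b := hpsd v hv
  have hb1 : (0:ℝ) < b + 1 := by linarith
  have ht := key (-a / (b + 1))
  have h4 : 0 ≤ (2 * (-a / (b + 1)) * a + (-a / (b + 1)) ^ 2 * b) * (b + 1) ^ 2 :=
    mul_nonneg ht (sq_nonneg _)
  have heq : (2 * (-a / (b + 1)) * a + (-a / (b + 1)) ^ 2 * b) * (b + 1) ^ 2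
      = -(2 * a ^ 2) * (b + 1) + a ^ 2 * b := by
    field_simp
  rw [heq] at h4
  have ha2 : a ^ 2 ≤ 0 := by nlinarith
  have ha0 : a ^ 2 = 0 := le_antisymm ha2 (sq_nonneg a)
  exact pow_eq_zero_iff two_ne_zero |>.mp ha0

lemma descend {n d : ℕ} (σ : MvPolynomial (Fin n) ℝ →ₗ[ℝ] ℝ)
    (hpsd : ∀ f : MvPolynomial (Fin n) ℝ, f.totalDegree ≤ d → 0 ≤ σ (f ^ 2))
    (g : MvPolynomial (Fin n) ℝ) :
    ∀ j : ℕ, 1 ≤ j → j * g.totalDegree ≤ d → σ ((g ^ j) ^ 2) = 0 → σ (g ^ 2) = 0 := by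
  intro j
  induction j using Nat.strong_induction_on with
  | _ j ih =>
    intro hj1 hjd h0
    rcases Nat.lt_or_ge j 2 with hj2 | hj2
    · interval_cases j
      · simpa using h0
    · -- j ≥ 2
      have hdegj : (g ^ j).totalDegree ≤ d :=
        le_trans (totalDegree_pow _ _) hjd
      have hdegj2 : (g ^ (j - 2)).totalDegree ≤ d := by
        refine le_trans (totalDegree_pow _ _) (le_trans ?_ hjd)
        exact Nat.mul_le_mul_right _ (Nat.sub_le _ _)
      have hz := cs_zero σ hpsd hdegj hdegj2 h0
      have hmul : g ^ j * g ^ (j - 2) = (g ^ (j - 1)) ^ 2 := by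
        rw [← pow_add, ← pow_mul]
        congr 1
        omega
      rw [hmul] at hz
      refine ih (j - 1) (by omega) (by omega) ?_ hz
      exact le_trans (Nat.mul_le_mul_right _ (by omega)) hjd

lemma sq_mul_isSumSq {R : Type*} [CommRing R] {s : R} (a : R) (hs : IsSumSq s) :
    IsSumSq (a ^ 2 * s) := by
  induction hs with
  | zero => simpa using IsSumSq.zero
  | @sq_add x t hx ht =>
      have : a ^ 2 * (x * x + t) = (a * x) * (a * x) + a ^ 2 * t := by ring
      rw [this]
      exact IsSumSq.sq_add _ ht

lemma sos_nonneg_bound {n : ℕ} {s : MvPolynomial (Fin n) ℝ} (hs : IsSumSq s) :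
    ∃ D : ℕ, ∀ d ≥ D, ∀ σ : MvPolynomial (Fin n) ℝ →ₗ[ℝ] ℝ,
      (∀ f : MvPolynomial (Fin n) ℝ, f.totalDegree ≤ d → 0 ≤ σ (f ^ 2)) → 0 ≤ σ s := by
  induction hs with
  | zero => exact ⟨0, fun d _ σ _ => by simp⟩
  | @sq_add x t ht ih =>
      obtain ⟨D, hD⟩ := ih
      refine ⟨max x.totalDegree D, fun d hd σ hpsd => ?_⟩
      have h1 : 0 ≤ σ (x ^ 2) := hpsd x (le_trans (le_max_left _ _) hd)
      have h2 : 0 ≤ σ t := hD d (le_trans (le_max_right _ _) hd) σ hpsd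
      have : σ (x * x + t) = σ (x ^ 2) + σ t := by rw [map_add, sq]
      rw [this]
      linarith

/-- If `g₁,…,g_k` generate `√[ℝ]{(h)}`, then there is `d₀` such that for all `d ≥ d₀` and
all `σ ∈ L_{2d}(±h)`, each `gᵢ ∈ Ann_d(σ)`; consequently `√[ℝ]{(h)} ⊆ (Ann_d(σ))`. -/
theorem realRadical_subset_span_ann_eventually {n r k : ℕ}
    (h : Fin r → MvPolynomial (Fin n) ℝ) (g : Fin k → MvPolynomial (Fin n) ℝ)
    (hg : ((Ideal.span (Set.range g) : Ideal (MvPolynomial (Fin n) ℝ)) :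
        Set (MvPolynomial (Fin n) ℝ)) = realRadical (Ideal.span (Set.range h))) :
    ∃ d₀ : ℕ, ∀ d ≥ d₀, ∀ σ : MvPolynomial (Fin n) ℝ →ₗ[ℝ] ℝ, MemL h d σ →
      (∀ i, g i ∈ Ann σ d) ∧
        realRadical (Ideal.span (Set.range h)) ⊆
          ((Ideal.span (Ann σ d) : Ideal (MvPolynomial (Fin n) ℝ)) :
            Set (MvPolynomial (Fin n) ℝ)) := by
  -- each g i is in the real radical, with exponent ≥ 1
  have hmem : ∀ i : Fin k, ∃ (m : ℕ) (s : MvPolynomial (Fin n) ℝ),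
      1 ≤ m ∧ IsSumSq s ∧ g i ^ (2 * m) + s ∈ Ideal.span (Set.range h) := by
    intro i
    have : g i ∈ realRadical (Ideal.span (Set.range h)) := by
      rw [← hg]
      exact Ideal.subset_span ⟨i, rfl⟩
    obtain ⟨m, s, hs, hI⟩ := this
    refine ⟨m + 1, g i ^ 2 * s, Nat.le_add_left 1 m, sq_mul_isSumSq _ hs, ?_⟩
    have : g i ^ (2 * (m + 1)) + g i ^ 2 * s = g i ^ 2 * (g i ^ (2 * m) + s) := by ring
    rw [this]
    exact Ideal.mul_mem_left _ _ hI
  choose m s hm1 hsos hI using hmem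
  -- representation in terms of the h's
  have hrep : ∀ i : Fin k, ∃ c : Fin r → MvPolynomial (Fin n) ℝ,
      ∑ j, c j • h j = g i ^ (2 * m i) + s i := by
    intro i
    exact (Submodule.mem_span_range_iff_exists_fun _).mp (hI i)
  choose c hc using hrep
  -- degree bounds for the sos parts
  have hsosb := fun i => sos_nonneg_bound (hsos i)
  choose D hD using hsosb
  set B : Fin k → ℕ := fun i => max (max (m i * (g i).totalDegree) (D i))
      (Finset.univ.sup fun j : Fin r => (c i j * h j).totalDegree) with hB
  refine ⟨Finset.univ.sup B, fun d hd σ hσ => ?_⟩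
  obtain ⟨hpsd, hvanish⟩ := hσ
  have hbound : ∀ i : Fin k, B i ≤ d :=
    fun i => le_trans (Finset.le_sup (f := B) (Finset.mem_univ i)) hd
  simp only [hB] at hbound
  have hAnn : ∀ i, g i ∈ Ann σ d := by
    intro i
    have hmd : m i * (g i).totalDegree ≤ d :=
      le_trans (le_max_left _ _) (le_trans (le_max_left _ _) (hbound i))
    have hgd : (g i).totalDegree ≤ d :=
      le_trans (Nat.le_mul_of_pos_left _ (hm1 i)) hmd
    -- σ vanishes on the ideal element
    have hIz : σ (g i ^ (2 * m i) + s i) = 0 := by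
      rw [← hc i, map_sum]
      refine Finset.sum_eq_zero fun j _ => ?_
      rw [smul_eq_mul]
      refine hvanish j (c i j) ?_
      have : (c i j * h j).totalDegree ≤ d :=
        le_trans (le_trans (Finset.le_sup (f := fun j : Fin r => (c i j * h j).totalDegree)
          (Finset.mem_univ j)) (le_max_right _ _)) (hbound i)
      omega
    have hpow_nn : 0 ≤ σ (g i ^ (2 * m i)) := by
      have : g i ^ (2 * m i) = (g i ^ m i) ^ 2 := by rw [← pow_mul, mul_comm]
      rw [this]
      exact hpsd _ (le_trans (totalDegree_pow _ _) hmd)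
    have hs_nn : 0 ≤ σ (s i) :=
      hD i d (le_trans (le_trans (le_max_right _ _) (le_max_left _ _)) (hbound i)) σ hpsd
    have hpow_z : σ ((g i ^ m i) ^ 2) = 0 := by
      have hsum : σ (g i ^ (2 * m i)) + σ (s i) = 0 := by rw [← map_add]; exact hIz
      have : σ (g i ^ (2 * m i)) = 0 := by linarith
      rwa [show g i ^ (2 * m i) = (g i ^ m i) ^ 2 by rw [← pow_mul, mul_comm]] at this
    have hg2 : σ (g i ^ 2) = 0 := descend σ hpsd (g i) (m i) (hm1 i) hmd hpow_z
    exact ⟨hgd, fun f hf => cs_zero σ hpsd hgd hf hg2⟩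
  refine ⟨hAnn, ?_⟩
  rw [← hg]
  have : Ideal.span (Set.range g) ≤ Ideal.span (Ann σ d) := by
    rw [Ideal.span_le]
    rintro _ ⟨i, rfl⟩
    exact Ideal.subset_span (hAnn i)
  exact this
end

section
/- A positive semidefinite linear functional σ on ℝ[x]_{2d} with σ(g^(2m) + s) = 0, where s is a sum of squares and deg g^(2m), deg s ≤ 2d, satisfies σ(g^(2m)) = 0 and, if 2^j·deg g ≤ d for the relevant powers, g ∈ Ann_d(σ). -/
open MvPolynomial

lemma cs_zero_s14 {n d : ℕ} (σ : MvPolynomial (Fin n) ℝ →ₗ[ℝ] ℝ)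
    (hpsd : ∀ f : MvPolynomial (Fin n) ℝ, f.totalDegree ≤ d → 0 ≤ σ (f ^ 2))
    (f h : MvPolynomial (Fin n) ℝ) (hf : f.totalDegree ≤ d) (hh : h.totalDegree ≤ d)
    (h0 : σ (f ^ 2) = 0) : σ (f * h) = 0 := by
  by_contra hne
  set a := σ (f * h) with ha
  set t : ℝ := -(σ (h ^ 2) + 1) / (2 * a) with ht
  have hdegq : (t • f + h).totalDegree ≤ d := by
    refine le_trans (totalDegree_add _ _) (max_le (le_trans (totalDegree_smul_le _ _) hf) hh)
  have hexp : ∀ u : ℝ, (u • f + h) ^ 2 = (u * u) • f ^ 2 + (2 * u) • (f * h) + h ^ 2 := by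
    intro u
    simp only [smul_eq_C_mul, map_mul, map_ofNat]
    ring
  have := hpsd _ hdegq
  rw [hexp t, map_add, map_add, map_smul, map_smul, h0, smul_eq_mul, smul_eq_mul,
    mul_zero] at this
  have h2 : 2 * t * a = -(σ (h ^ 2) + 1) := by
    rw [ht]
    field_simp
  rw [← ha] at this
  nlinarith [this, h2]

/-- A psd linear functional `σ` on `ℝ[x]_{2d}` with `σ(g^(2^m) + s) = 0`, where `s` is a
sum of squares of polynomials of degree ≤ d, satisfies `σ(g^(2^m)) = 0`, and if
`2^j·deg g ≤ d` for the relevant powers `j < m` (with `m ≥ 1`), then `g ∈ Ann_d(σ)`. -/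
theorem psd_annihilates_of_sos_relation {n d : ℕ} (σ : MvPolynomial (Fin n) ℝ →ₗ[ℝ] ℝ)
    (hpsd : ∀ f : MvPolynomial (Fin n) ℝ, f.totalDegree ≤ d → 0 ≤ σ (f ^ 2))
    (g s : MvPolynomial (Fin n) ℝ) (m : ℕ) (hm : 1 ≤ m)
    (hs : s ∈ AddSubmonoid.closure
      {q : MvPolynomial (Fin n) ℝ | ∃ p, p.totalDegree ≤ d ∧ q = p ^ 2})
    (hdeg2d : (g ^ 2 ^ m).totalDegree ≤ 2 * d) (hsdeg : s.totalDegree ≤ 2 * d)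
    (hzero : σ (g ^ 2 ^ m + s) = 0)
    (hdeg : ∀ j < m, 2 ^ j * g.totalDegree ≤ d) :
    σ (g ^ 2 ^ m) = 0 ∧ g ∈ Ann σ d := by
  -- degree of g^(2^j) ≤ d for j < m
  have hdegpow : ∀ j < m, (g ^ 2 ^ j).totalDegree ≤ d := fun j hj =>
    le_trans (totalDegree_pow _ _) (hdeg j hj)
  -- σ s ≥ 0
  have hsnn : 0 ≤ σ s := by
    refine AddSubmonoid.closure_induction (fun q hq => ?_) (by simp) (fun a b _ _ ha hb => ?_) hs
    · obtain ⟨p, hp, rfl⟩ := hq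
      exact hpsd p hp
    · rw [map_add]; exact add_nonneg ha hb
  -- σ (g^(2^m)) ≥ 0
  have hsq : g ^ 2 ^ m = (g ^ 2 ^ (m - 1)) ^ 2 := by
    rw [← pow_mul]
    congr 1
    rw [← pow_succ]
    congr 1
    omega
  have hgnn : 0 ≤ σ (g ^ 2 ^ m) := by
    rw [hsq]; exact hpsd _ (hdegpow _ (by omega))
  rw [map_add] at hzero
  have hgz : σ (g ^ 2 ^ m) = 0 := by linarith
  refine ⟨hgz, ?_, ?_⟩
  · simpa using hdeg 0 hm
  -- downward iteration: σ ((g ^ 2 ^ k) ^ 2) = 0 for k ≤ m - 1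
  have key : ∀ i, i ≤ m - 1 → σ (g ^ 2 ^ (m - i)) = 0 := by
    intro i
    induction i with
    | zero => intro _; simpa using hgz
    | succ i ih =>
      intro hi
      have h1 : σ (g ^ 2 ^ (m - i)) = 0 := ih (by omega)
      have hsq2 : g ^ 2 ^ (m - i) = (g ^ 2 ^ (m - i - 1)) ^ 2 := by
        rw [← pow_mul]
        congr 1
        rw [← pow_succ]
        congr 1
        omega
      have h2 := cs_zero_s14 σ hpsd (g ^ 2 ^ (m - i - 1)) 1 (hdegpow _ (by omega))
        (by simp) (hsq2 ▸ h1)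
      rw [mul_one] at h2
      have : m - (i + 1) = m - i - 1 := by omega
      rw [this]
      exact h2
  have hg2 : σ (g ^ 2) = 0 := by
    have := key (m - 1) le_rfl
    have hmm : m - (m - 1) = 1 := by omega
    rw [hmm] at this
    simpa using this
  intro h hh
  exact cs_zero_s14 σ hpsd g h (by simpa using hdeg 0 hm) hh (by simpa using hg2)
end

section
/- Sign Changing Criterion (one direction): if f ∈ ℝ[x₁,…,xₙ] is irreducible and changes sign on ℝⁿ (there exist points a, b ∈ ℝⁿ with f(a)·f(b) < 0), then the principal ideal (f) is real radical. -/
open MvPolynomial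

open scoped nonZeroDivisors

/-- An ideal `I ⊆ ℝ[x₁,…,xₙ]` is real radical if whenever `p^(2m) + s ∈ I`
with `s` a sum of squares, then `p ∈ I`. -/
def IsRealRadical {n : ℕ} (I : Ideal (MvPolynomial (Fin n) ℝ)) : Prop :=
  ∀ (p : MvPolynomial (Fin n) ℝ) (m : ℕ) (s : MvPolynomial (Fin n) ℝ),
    IsSumSq s → p ^ (2 * m) + s ∈ I → p ∈ I

lemma eval_aeval_real {σ τ : Type*} (y : τ → ℝ) (g : σ → MvPolynomial τ ℝ)
    (f : MvPolynomial σ ℝ) :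
    eval y (aeval g f) = eval (fun i => eval y (g i)) f := by
  induction f using MvPolynomial.induction_on with
  | C r => simp [MvPolynomial.algebraMap_eq]
  | add p q hp hq => simp only [map_add, hp, hq]
  | mul_X p i hp => simp only [map_mul, aeval_X, eval_X, eval_mul, hp]


lemma vanish_box_eq_zero : ∀ {N : ℕ} (p : MvPolynomial (Fin N) ℝ) (c₀ : Fin N → ℝ) (ε : ℝ),
    0 < ε → (∀ c : Fin N → ℝ, (∀ i, |c i - c₀ i| < ε) → eval c p = 0) → p = 0 := by
  intro N
  induction N with
  | zero =>
    intro p c₀ ε hε hv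
    obtain ⟨r, rfl⟩ := C_surjective (Fin 0) p
    have := hv c₀ (fun i => i.elim0)
    simpa using this
  | succ N ih =>
    intro p c₀ ε hε hv
    have key : ∀ k : ℕ, (finSuccEquiv ℝ N p).coeff k = 0 := by
      intro k
      apply ih _ (c₀ ∘ Fin.succ) ε hε
      intro c hc
      have huniv : (Polynomial.map (eval c) (finSuccEquiv ℝ N p)) = 0 := by
        apply Polynomial.eq_zero_of_infinite_isRoot
        apply Set.Infinite.mono (h := ?_) (Set.Ioo_infinite (a := c₀ 0 - ε) (b := c₀ 0 + ε) (by linarith))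
        · intro t ht
          simp only [Set.mem_setOf_eq, Polynomial.IsRoot]
          rw [← eval_eq_eval_mv_eval']
          apply hv
          intro i
          refine Fin.cases ?_ ?_ i
          · simpa [abs_sub_lt_iff] using ⟨by linarith [ht.2], by linarith [ht.1]⟩
          · intro k
            simpa using hc k
      have := congrArg (fun q => Polynomial.coeff q k) huniv
      simpa [Polynomial.coeff_map] using this
    have : finSuccEquiv ℝ N p = 0 := Polynomial.ext fun k => by simp [key k]
    have h2 := congrArg (finSuccEquiv ℝ N).symm this
    simpa using h2

lemma dvd_of_vanish_step {N : ℕ} (F G : MvPolynomial (Fin (N+1)) ℝ)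
    (hirr : Irreducible F)
    (hsign : eval (Fin.cons 0 0) F * eval (Fin.cons 1 (0 : Fin N → ℝ)) F < 0)
    (hvan : ∀ c, eval c F = 0 → eval c G = 0) : F ∣ G := by
  by_contra hndvd
  set R := MvPolynomial (Fin N) ℝ with hR
  let K := FractionRing R
  set Fp := finSuccEquiv ℝ N F with hFp
  set Gp := finSuccEquiv ℝ N G with hGp
  have hFpirr : Irreducible Fp :=
    (MulEquiv.irreducible_iff (finSuccEquiv ℝ N : MvPolynomial (Fin (N+1)) ℝ ≃* Polynomial R)).mpr hirr
  haveI : NormalizationMonoid R := UniqueFactorizationMonoid.normalizationMonoid.toNormalizationMonoid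
  haveI : NormalizedGCDMonoid R := UniqueFactorizationMonoid.toNormalizedGCDMonoid R
  haveI : UniqueFactorizationMonoid (Polynomial R) := Polynomial.uniqueFactorizationMonoid
  have hFprime : Prime Fp := (UniqueFactorizationMonoid.irreducible_iff_prime).mp hFpirr
  -- positive degree
  have hdeg : 0 < Fp.natDegree := by
    rcases Nat.eq_zero_or_pos Fp.natDegree with h0 | h
    · exfalso
      have hC := Polynomial.eq_C_of_natDegree_eq_zero h0
      have he : ∀ t : ℝ, eval (Fin.cons t (0 : Fin N → ℝ)) F = eval 0 (Fp.coeff 0) := by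
        intro t
        rw [eval_eq_eval_mv_eval', ← hFp, hC]
        simp
      rw [he 0, he 1] at hsign
      exact (mul_self_nonneg _).not_gt hsign
    · exact h
  -- primitivity
  have hprim : Fp.IsPrimitive := by
    intro r hr
    obtain ⟨w, hw⟩ := hr
    rcases hFpirr.isUnit_or_isUnit hw with h | h
    · exact Polynomial.isUnit_C.mp h
    · exfalso
      have hw0 : w.natDegree = 0 := Polynomial.natDegree_eq_zero_of_isUnit h
      have : Fp.natDegree = 0 := by
        rw [hw]
        refine le_antisymm (Polynomial.natDegree_mul_le.trans ?_) (Nat.zero_le _)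
        simp [hw0]
      omega
  -- pass to fraction field
  have hFKirr : Irreducible (Fp.map (algebraMap R K)) :=
    (hprim.irreducible_iff_irreducible_map_fraction_map (K := K)).mp hFpirr
  have hFKndvd : ¬ (Fp.map (algebraMap R K)) ∣ (Gp.map (algebraMap R K)) := by
    rintro ⟨r, hr⟩
    obtain ⟨s, hs⟩ := IsLocalization.integerNormalization_map_to_map R⁰ r
    have hds : Fp ∣ Gp * Polynomial.C (s : R) := by
      refine ⟨IsLocalization.integerNormalization R⁰ r, ?_⟩
      apply Polynomial.map_injective (algebraMap R K) (IsFractionRing.injective R K)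
      rw [Polynomial.map_mul, Polynomial.map_mul, hs, hr, Polynomial.map_C,
        Algebra.smul_def, Polynomial.algebraMap_apply]
      ring
    rcases hFprime.2.2 _ _ hds with h | h
    · -- then F ∣ G
      apply hndvd
      have := map_dvd (finSuccEquiv ℝ N).symm h
      rw [hFp, hGp] at this
      simpa using this
    · have hs0 : (s : R) ≠ 0 := nonZeroDivisors.coe_ne_zero s
      have := Polynomial.natDegree_le_of_dvd h (by simpa using hs0)
      simp [Polynomial.natDegree_C] at this
      omega
  have hcop : IsCoprime (Fp.map (algebraMap R K)) (Gp.map (algebraMap R K)) :=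
    (hFKirr.coprime_iff_not_dvd).mpr hFKndvd
  obtain ⟨A, B, hAB⟩ := hcop
  obtain ⟨sa, hsa⟩ := IsLocalization.integerNormalization_map_to_map R⁰ A
  obtain ⟨sb, hsb⟩ := IsLocalization.integerNormalization_map_to_map R⁰ B
  have hd0 : (sa : R) * (sb : R) ≠ 0 :=
    mul_ne_zero (nonZeroDivisors.coe_ne_zero sa) (nonZeroDivisors.coe_ne_zero sb)
  have hkey : (IsLocalization.integerNormalization R⁰ A) * Fp * Polynomial.C (sb : R)
      + (IsLocalization.integerNormalization R⁰ B) * Gp * Polynomial.C (sa : R)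
      = Polynomial.C ((sa : R) * (sb : R)) := by
    apply Polynomial.map_injective (algebraMap R K) (IsFractionRing.injective R K)
    rw [Polynomial.map_add, Polynomial.map_mul, Polynomial.map_mul, Polynomial.map_mul,
      Polynomial.map_mul, hsa, hsb, Polynomial.map_C, Polynomial.map_C, Polynomial.map_C,
      Algebra.smul_def, Algebra.smul_def, Polynomial.algebraMap_apply,
      Polynomial.algebraMap_apply, map_mul, Polynomial.C_mul]
    linear_combination (Polynomial.C (algebraMap R K (sa : R)) *
      Polynomial.C (algebraMap R K (sb : R))) * hAB
  -- evaluate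
  have hEval : ∀ (t : ℝ) (c : Fin N → ℝ),
      Polynomial.eval t (Polynomial.map (eval c) (IsLocalization.integerNormalization R⁰ A))
          * eval (Fin.cons t c) F * eval c (sb : R)
        + Polynomial.eval t (Polynomial.map (eval c) (IsLocalization.integerNormalization R⁰ B))
          * eval (Fin.cons t c) G * eval c (sa : R)
        = eval c ((sa : R) * (sb : R)) := by
    intro t c
    have h := congrArg (fun q => Polynomial.eval t (Polynomial.map (eval c) q)) hkey
    simp only [Polynomial.map_add, Polynomial.map_mul, Polynomial.map_C, Polynomial.eval_add,
      Polynomial.eval_mul, Polynomial.eval_C] at h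
    rw [hFp, hGp] at h
    rw [← eval_eq_eval_mv_eval', ← eval_eq_eval_mv_eval'] at h
    exact h
  -- continuity and choice of ε
  have hconsc : ∀ t : ℝ, Continuous fun c : Fin N → ℝ => (Fin.cons t c : Fin (N+1) → ℝ) := by
    intro t
    apply continuous_pi
    intro i
    refine Fin.cases ?_ ?_ i
    · simpa using continuous_const
    · intro k
      simpa using continuous_apply k
  have hcont : Continuous fun c : Fin N → ℝ =>
      eval (Fin.cons 0 c) F * eval (Fin.cons 1 c) F :=
    ((MvPolynomial.continuous_eval F).comp (hconsc 0)).mul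
      ((MvPolynomial.continuous_eval F).comp (hconsc 1))
  obtain ⟨ε, hε, hball⟩ : ∃ ε > 0, ∀ c : Fin N → ℝ, dist c 0 < ε →
      eval (Fin.cons 0 c) F * eval (Fin.cons 1 c) F < 0 := by
    have hopen := (isOpen_Iio (a := (0:ℝ))).preimage hcont
    rw [Metric.isOpen_iff] at hopen
    obtain ⟨ε, hε2, hb⟩ := hopen 0 hsign
    exact ⟨ε, hε2, fun c hc => hb (Metric.mem_ball.mpr hc)⟩
  -- the polynomial sa*sb vanishes on a box
  have hbox : ∀ c : Fin N → ℝ, (∀ i, |c i - (0 : Fin N → ℝ) i| < ε) →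
      eval c ((sa : R) * (sb : R)) = 0 := by
    intro c hc
    have hdist : dist c 0 < ε := by
      rw [dist_pi_lt_iff hε]
      intro i
      simpa [Real.dist_eq] using hc i
    have hsgn := hball c hdist
    have hFc : Continuous fun t : ℝ => eval (Fin.cons t c) F := by
      apply (MvPolynomial.continuous_eval F).comp
      apply continuous_pi
      intro i
      refine Fin.cases ?_ ?_ i
      · simpa using continuous_id'
      · intro k
        simpa using continuous_const
    obtain ⟨t, ht0⟩ : ∃ t : ℝ, eval (Fin.cons t c) F = 0 := by
      rcases mul_neg_iff.mp hsgn with ⟨h1, h2⟩ | ⟨h1, h2⟩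
      · obtain ⟨t, _, ht⟩ := intermediate_value_Icc' (by norm_num : (0:ℝ) ≤ 1)
          hFc.continuousOn ⟨le_of_lt h2, le_of_lt h1⟩
        exact ⟨t, ht⟩
      · obtain ⟨t, _, ht⟩ := intermediate_value_Icc (by norm_num : (0:ℝ) ≤ 1)
          hFc.continuousOn ⟨le_of_lt h1, le_of_lt h2⟩
        exact ⟨t, ht⟩
    have hGt := hvan _ ht0
    have h := hEval t c
    rw [ht0, hGt] at h
    simpa using h.symm
  exact hd0 (vanish_box_eq_zero _ 0 ε hε hbox)

lemma dvd_of_vanish {n : ℕ} (f g : MvPolynomial (Fin n) ℝ) (hirr : Irreducible f)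
    (a b : Fin n → ℝ) (hsign : eval a f * eval b f < 0)
    (hvan : ∀ c, eval c f = 0 → eval c g = 0) : f ∣ g := by
  have hab : a ≠ b := by
    rintro rfl
    exact (mul_self_nonneg (eval a f)).not_gt hsign
  obtain ⟨j, hvj⟩ : ∃ j, b j - a j ≠ 0 := by
    by_contra h
    push_neg at h
    exact hab (funext fun i => by have := h i; linarith)
  obtain ⟨N, rfl⟩ : ∃ N, n = N + 1 := by
    refine ⟨n - 1, ?_⟩
    have : n ≠ 0 := by rintro rfl; exact j.elim0
    omega
  set s : Equiv.Perm (Fin (N+1)) := Equiv.swap 0 j with hs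
  have hss : ∀ i, s (s i) = i := fun i => Equiv.swap_apply_self _ _ _
  have hs0 : s 0 = j := Equiv.swap_apply_left _ _
  have hsj : s j = 0 := Equiv.swap_apply_right _ _
  have hsi : ∀ i, s i = 0 ↔ i = j := by
    intro i
    constructor
    · intro h
      have h2 := congrArg s h
      rwa [hss, hs0] at h2
    · rintro rfl; exact hsj
  set u : Fin (N+1) → ℝ := fun i => (b i - a i) - if i = j then 1 else 0 with hu
  have huj : u j = (b j - a j) - 1 := by simp [hu]
  set gσ : Fin (N+1) → MvPolynomial (Fin (N+1)) ℝ :=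
    fun i => C (a i) + X (s i) + X 0 * C (u i) with hgσ
  set gτ : Fin (N+1) → MvPolynomial (Fin (N+1)) ℝ :=
    fun i => X (s i) - C (a (s i)) - (X j - C (a j)) * C (u (s i) / (b j - a j)) with hgτ
  have h1 : (aeval gσ).comp (aeval gτ) = AlgHom.id ℝ (MvPolynomial (Fin (N+1)) ℝ) := by
    apply MvPolynomial.algHom_ext
    intro i
    have hre : u j * (u (s i) / (b j - a j)) + u (s i) / (b j - a j) = u (s i) := by
      rw [huj]; field_simp; ring
    have hC : (C (u (s i)) : MvPolynomial (Fin (N+1)) ℝ)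
        = C (u j) * C (u (s i) / (b j - a j)) + C (u (s i) / (b j - a j)) := by
      rw [← C_mul, ← C_add, hre]
    simp only [AlgHom.comp_apply, aeval_X, AlgHom.id_apply, hgτ, hgσ, map_sub, map_mul,
      map_add, aeval_X, aeval_C, MvPolynomial.algebraMap_eq, hss, hs0, hsj]
    linear_combination (X 0 : MvPolynomial (Fin (N+1)) ℝ) * hC
  have h2 : (aeval gτ).comp (aeval gσ) = AlgHom.id ℝ (MvPolynomial (Fin (N+1)) ℝ) := by
    apply MvPolynomial.algHom_ext
    intro i
    have hre : (u j / (b j - a j)) * u i + u i / (b j - a j) = u i := by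
      rw [huj]; field_simp; ring
    have hC : (C (u i) : MvPolynomial (Fin (N+1)) ℝ)
        = C (u j / (b j - a j)) * C (u i) + C (u i / (b j - a j)) := by
      rw [← C_mul, ← C_add, hre]
    simp only [AlgHom.comp_apply, aeval_X, AlgHom.id_apply, hgτ, hgσ, map_sub, map_mul,
      map_add, aeval_X, aeval_C, MvPolynomial.algebraMap_eq, hss, hs0, hsj]
    linear_combination (X j - C (a j) : MvPolynomial (Fin (N+1)) ℝ) * hC
  set e : MvPolynomial (Fin (N+1)) ℝ ≃ₐ[ℝ] MvPolynomial (Fin (N+1)) ℝ :=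
    AlgEquiv.ofAlgHom (aeval gσ) (aeval gτ) h1 h2 with he
  have heval : ∀ (y : Fin (N+1) → ℝ) (p : MvPolynomial (Fin (N+1)) ℝ),
      eval y (e p) = eval (fun i => eval y (gσ i)) p := by
    intro y p
    exact eval_aeval_real y gσ p
  have hgv : ∀ (y : Fin (N+1) → ℝ) (i : Fin (N+1)),
      eval y (gσ i) = a i + y (s i) + y 0 * u i := by
    intro y i
    simp [hgσ]
  have hz : ((Fin.cons 0 0) : Fin (N+1) → ℝ) = (0 : Fin (N+1) → ℝ) := by
    funext i; refine Fin.cases ?_ ?_ i <;> simp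
  have hpa : (fun i => eval (0 : Fin (N+1) → ℝ) (gσ i)) = a := by
    funext i
    rw [hgv]
    simp
  have hpb : (fun i => eval ((Fin.cons 1 0) : Fin (N+1) → ℝ) (gσ i)) = b := by
    funext i
    rw [hgv]
    have hone : ∀ k : Fin (N+1), ((Fin.cons 1 0 : Fin (N+1) → ℝ)) k = if k = 0 then 1 else 0 := by
      intro k
      refine Fin.cases ?_ ?_ k <;> simp [Fin.succ_ne_zero]
    rw [hone, hone]
    simp only [if_pos rfl, hu, hsi]
    by_cases hij : i = j
    · subst hij; simp
    · simp [hij]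
  have hF : eval (Fin.cons 0 0 : Fin (N+1) → ℝ) (e f)
      * eval (Fin.cons 1 (0 : Fin N → ℝ)) (e f) < 0 := by
    rw [heval, heval, hz, hpa, hpb]
    exact hsign
  have hvan' : ∀ c, eval c (e f) = 0 → eval c (e g) = 0 := by
    intro c hc
    rw [heval] at hc ⊢
    exact hvan _ hc
  have hirr' : Irreducible (e f) :=
    (MulEquiv.irreducible_iff
      (e : MvPolynomial (Fin (N+1)) ℝ ≃* MvPolynomial (Fin (N+1)) ℝ)).mpr hirr
  have hdvd := dvd_of_vanish_step (e f) (e g) hirr' hF hvan'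
  have hfin := map_dvd e.symm hdvd
  simpa using hfin

/-- Sign Changing Criterion (one direction): if `f` is irreducible and changes sign on `ℝⁿ`,
then the principal ideal `(f)` is real radical. -/
theorem sign_changing_criterion {n : ℕ} (f : MvPolynomial (Fin n) ℝ)
    (hirr : Irreducible f) (a b : Fin n → ℝ) (hsign : eval a f * eval b f < 0) :
    IsRealRadical (Ideal.span {f}) := by
  intro p m s hs hmem
  rw [Ideal.mem_span_singleton] at hmem ⊢
  have hvan : ∀ c, eval c f = 0 → eval c p = 0 := by
    intro c hc
    obtain ⟨w, hw⟩ := hmem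
    have h0 : eval c (p ^ (2 * m) + s) = 0 := by rw [hw, eval_mul, hc, zero_mul]
    have hsnn : ∀ {q : MvPolynomial (Fin n) ℝ}, IsSumSq q → 0 ≤ eval c q := by
      intro q hq
      induction hq with
      | zero => simp
      | @sq_add a S pS ih =>
        simp only [eval_add, eval_mul]
        nlinarith [mul_self_nonneg (eval c a)]
    have hpow : (0:ℝ) ≤ (eval c p) ^ (2 * m) := Even.pow_nonneg (even_two_mul m) _
    rw [eval_add, eval_pow] at h0
    have hp0 : (eval c p) ^ (2 * m) = 0 := by
      have := hsnn hs
      linarith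
    rcases Nat.eq_zero_or_pos m with rfl | hm
    · simp at hp0
    · exact pow_eq_zero_iff (by omega) |>.mp hp0
  exact dvd_of_vanish f p hirr a b hsign hvan
end
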